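/- Let C : [0,1] → ℝ be continuously differentiable such that t ↦ t·C'(t) is strictly increasing on [0,1]. Let l ∈ (0, 1/6), r = 1 − 2l, and let M be as defined. Then every (3,1)-stochastic measure concentrated on M is a primal solution: for every probability measure π on ℝ³ with π(M) = 1 whose pushforwards under the three coordinate projections all equal Lebesgue measure on [0,1], and for every probability measure ν on [0,1]³ whose pushforwards under the three coordinate projections all equal Lebesgue measure on [0,1], one has ∫ C(x·y·z) dπ ≤ ∫ C(x·y·z) dν. -/

import Mathlib

open Set MeasureTheory

/-- The set `M ⊆ [0,1]³`: the union of the three segments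
`Mx = {(t, 1−2t, 1−2t) : 0 ≤ t ≤ l}`, `My = {(1−2t, t, 1−2t) : 0 ≤ t ≤ l}`,
`Mz = {(1−2t, 1−2t, t) : 0 ≤ t ≤ l}` and the two-dimensional piece
`M₂ = {(x,y,z) : l ≤ x,y,z ≤ 1−2l, xyz = l(1−2l)²}`. -/
def Mset (l : ℝ) : Set (ℝ × ℝ × ℝ) :=
  {p | ∃ t, 0 ≤ t ∧ t ≤ l ∧
    (p = (t, 1 - 2*t, 1 - 2*t) ∨ p = (1 - 2*t, t, 1 - 2*t) ∨ p = (1 - 2*t, 1 - 2*t, t))} ∪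
  {p | l ≤ p.1 ∧ p.1 ≤ 1 - 2*l ∧ l ≤ p.2.1 ∧ p.2.1 ≤ 1 - 2*l ∧ l ≤ p.2.2 ∧ p.2.2 ≤ 1 - 2*l ∧
    p.1 * p.2.1 * p.2.2 = l * (1 - 2*l)^2}

noncomputable def clamp (s : ℝ) : ℝ := max 0 (min s 1)

noncomputable def mAux (l t : ℝ) : ℝ :=
  if t ≤ 0 then 0 else if t ≤ l then t*(1-2*t)^2 else if t ≤ 1-2*l then l*(1-2*l)^2
  else if t ≤ 1 then t^2*(1-t)/2 else 0

noncomputable def rhoAux (C' : ℝ → ℝ) (l t : ℝ) : ℝ :=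
  if t ≤ l then (1-2*t)^2 * C' (clamp (mAux l t))
  else if t ≤ 1-2*l then (l*(1-2*l)^2 / max t l) * C' (clamp (l*(1-2*l)^2))
  else (max 0 (t*(1-t))/2) * C' (clamp (mAux l t))

noncomputable def phiAux (C C' : ℝ → ℝ) (l x : ℝ) : ℝ :=
  (C (l*(1-2*l)^2) - 2*(l*(1-2*l)^2*C' (l*(1-2*l)^2))*Real.log ((1-2*l)/l))/3
    + ∫ t in l..x, rhoAux C' l t

lemma clamp_mem (s : ℝ) : clamp s ∈ Icc (0:ℝ) 1 := by
  constructor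
  · exact le_max_left _ _
  · simp only [clamp, max_le_iff]
    exact ⟨zero_le_one, min_le_right _ _⟩

lemma clamp_eq {s : ℝ} (h0 : 0 ≤ s) (h1 : s ≤ 1) : clamp s = s := by
  simp [clamp, min_eq_left h1, max_eq_right h0]

lemma continuous_clamp : Continuous clamp :=
  continuous_const.max (continuous_id.min continuous_const)

/-- branch 1 monotone -/
lemma b1_mono {a b : ℝ} (h0 : 0 ≤ a) (hab : a ≤ b) (hb : b ≤ 1/6) :
    a*(1-2*a)^2 ≤ b*(1-2*b)^2 := by
  nlinarith [mul_nonneg (mul_nonneg (sub_nonneg.2 hab) (by linarith : (0:ℝ) ≤ 1-a-b))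
      (by linarith : (0:ℝ) ≤ 1-3*a-3*b),
    mul_nonneg (sub_nonneg.2 hab) (sq_nonneg (a-b))]

/-- branch 3 antitone -/
lemma b3_anti {a b : ℝ} (ha : 2/3 ≤ a) (hab : a ≤ b) (hb : b ≤ 1) :
    b^2*(1-b)/2 ≤ a^2*(1-a)/2 := by
  have hb' : (2:ℝ)/3 ≤ b := ha.trans hab
  nlinarith [mul_nonneg (sub_nonneg.2 hab) (mul_nonneg (by linarith : (0:ℝ) ≤ a) (by linarith : (0:ℝ) ≤ 3*a-2)),
    mul_nonneg (sub_nonneg.2 hab) (mul_nonneg (by linarith : (0:ℝ) ≤ b) (by linarith : (0:ℝ) ≤ 3*b-2)),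
    mul_nonneg (sub_nonneg.2 hab) (mul_nonneg (by linarith : (0:ℝ) ≤ b) (by linarith : (0:ℝ) ≤ 3*a-2)),
    sq_nonneg (b-a)]

section Basic

variable {l : ℝ} (hl0 : 0 < l) (hl6 : l < 1/6)

include hl0 hl6

lemma A_pos : 0 < l*(1-2*l)^2 := by
  have h : (0:ℝ) < 1-2*l := by linarith
  positivity

lemma A_le_one : l*(1-2*l)^2 ≤ 1 := by nlinarith [sq_nonneg (1-2*l), sq_nonneg l]

lemma mA_nonneg (t : ℝ) : 0 ≤ mAux l t := by
  unfold mAux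
  split_ifs with h1 h2 h3 h4
  · exact le_refl 0
  · push_neg at h1; nlinarith [sq_nonneg (1-2*t)]
  · exact (A_pos hl0 hl6).le
  · push_neg at h1; nlinarith
  · exact le_refl 0

lemma mA_le (t : ℝ) : mAux l t ≤ l*(1-2*l)^2 := by
  unfold mAux
  split_ifs with h1 h2 h3 h4
  · exact (A_pos hl0 hl6).le
  · push_neg at h1; exact b1_mono h1.le h2 hl6.le
  · exact le_refl _
  · push_neg at h3
    calc t^2*(1-t)/2 ≤ (1-2*l)^2*(1-(1-2*l))/2 := b3_anti (by linarith) h3.le h4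
      _ = l*(1-2*l)^2 := by ring
  · exact (A_pos hl0 hl6).le

lemma mA_le_one (t : ℝ) : mAux l t ≤ 1 := (mA_le hl0 hl6 t).trans (A_le_one hl0 hl6)

lemma mA_eq1 {t : ℝ} (h0 : 0 < t) (h : t ≤ l) : mAux l t = t*(1-2*t)^2 := by
  unfold mAux; rw [if_neg (by linarith), if_pos h]

lemma mA_eq2 {t : ℝ} (h1 : l ≤ t) (h2 : t ≤ 1-2*l) : mAux l t = l*(1-2*l)^2 := by
  unfold mAux
  rcases eq_or_lt_of_le h1 with h | h
  · rw [if_neg (by linarith), if_pos (le_of_eq h.symm), ← h]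
  · rw [if_neg (by linarith), if_neg (by linarith), if_pos h2]

lemma mA_eq3 {t : ℝ} (h1 : 1-2*l ≤ t) (h2 : t ≤ 1) : mAux l t = t^2*(1-t)/2 := by
  unfold mAux
  rcases eq_or_lt_of_le h1 with h | h
  · rw [if_neg (by linarith), if_neg (by linarith), if_pos (le_of_eq h.symm), ← h]; ring
  · rw [if_neg (by linarith), if_neg (by linarith), if_neg (by linarith), if_pos h2]

/-- On `[x, 1-2x]` the value of `m` is at least `m x`, for `0 < x ≤ l`. -/
lemma m_ge_of {x w : ℝ} (hx0 : 0 < x) (hxl : x ≤ l) (hw1 : x ≤ w) (hw2 : w ≤ 1-2*x) :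
    mAux l x ≤ mAux l w := by
  rw [mA_eq1 hl0 hl6 hx0 hxl]
  rcases le_or_gt w l with h | h
  · rw [mA_eq1 hl0 hl6 (lt_of_lt_of_le hx0 hw1) h]
    exact b1_mono hx0.le hw1 (h.trans hl6.le)
  rcases le_or_gt w (1-2*l) with h2 | h2
  · rw [mA_eq2 hl0 hl6 h.le h2]
    exact b1_mono hx0.le hxl hl6.le
  · rw [mA_eq3 hl0 hl6 h2.le (by linarith)]
    calc x*(1-2*x)^2 = (1-2*x)^2*(1-(1-2*x))/2 := by ring
      _ ≤ w^2*(1-w)/2 := b3_anti (by linarith) hw2 (by linarith)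

/-- On `[1-2x, 1]` the value of `m` is at most `m x`, for `0 < x ≤ l`. -/
lemma m_le_of {x w : ℝ} (hx0 : 0 < x) (hxl : x ≤ l) (hw1 : 1-2*x ≤ w) (hw2 : w ≤ 1) :
    mAux l w ≤ mAux l x := by
  rw [mA_eq1 hl0 hl6 hx0 hxl]
  rcases le_or_gt w (1-2*l) with h | h
  · have hxl' : x = l := by linarith
    rw [mA_eq2 hl0 hl6 (by linarith) h, hxl']
  · rw [mA_eq3 hl0 hl6 h.le hw2]
    calc w^2*(1-w)/2 ≤ (1-2*x)^2*(1-(1-2*x))/2 := b3_anti (by linarith) hw1 hw2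
      _ = x*(1-2*x)^2 := by ring

end Basic

section Rho
variable {C' l : ℝ → ℝ}
end Rho

section Rho
variable {C' : ℝ → ℝ} {l : ℝ} (hl0 : 0 < l) (hl6 : l < 1/6)
include hl0 hl6

lemma rho_key {t : ℝ} (ht0 : 0 < t) (ht1 : t ≤ 1) :
    t * rhoAux C' l t = mAux l t * C' (mAux l t) := by
  unfold rhoAux
  split_ifs with h1 h2
  · rw [mA_eq1 hl0 hl6 ht0 h1,
      clamp_eq (by nlinarith [sq_nonneg (1-2*t)]) (by rw [← mA_eq1 hl0 hl6 ht0 h1]; exact mA_le_one hl0 hl6 t)]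
    ring
  · push_neg at h1
    rw [mA_eq2 hl0 hl6 h1.le h2, clamp_eq (A_pos hl0 hl6).le (A_le_one hl0 hl6),
      max_eq_left (by linarith : l ≤ t)]
    field_simp
  · push_neg at h1 h2
    rw [mA_eq3 hl0 hl6 h2.le ht1,
      clamp_eq (by nlinarith) (by rw [← mA_eq3 hl0 hl6 h2.le ht1]; exact mA_le_one hl0 hl6 t),
      max_eq_right (by nlinarith : (0:ℝ) ≤ t*(1-t))]
    ring

lemma rho_mid {t : ℝ} (h1 : l ≤ t) (h2 : t ≤ 1-2*l) :
    rhoAux C' l t = (l*(1-2*l)^2 * C' (l*(1-2*l)^2)) * t⁻¹ := by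
  unfold rhoAux
  rw [clamp_eq (A_pos hl0 hl6).le (A_le_one hl0 hl6)]
  rcases eq_or_lt_of_le h1 with h | h
  · rw [if_pos (le_of_eq h.symm), ← h, mA_eq2 hl0 hl6 le_rfl (by linarith),
      clamp_eq (A_pos hl0 hl6).le (A_le_one hl0 hl6)]
    field_simp
  · rw [if_neg (by linarith), if_pos h2, max_eq_left h.le]
    field_simp

lemma rho_eq1 {t : ℝ} (ht0 : 0 < t) (ht : t ≤ l) :
    rhoAux C' l t = (1-2*t)^2 * C' (t*(1-2*t)^2) := by
  unfold rhoAux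
  rw [if_pos ht, mA_eq1 hl0 hl6 ht0 ht,
    clamp_eq (by nlinarith [sq_nonneg (1-2*t)]) (by rw [← mA_eq1 hl0 hl6 ht0 ht]; exact mA_le_one hl0 hl6 t)]

lemma rho_mirror {t : ℝ} (ht0 : 0 ≤ t) (htl : t ≤ l) :
    rhoAux C' l (1-2*t) = (t*(1-2*t)) * C' (t*(1-2*t)^2) := by
  have hm : mAux l (1-2*t) = t*(1-2*t)^2 := by
    rw [mA_eq3 hl0 hl6 (by linarith) (by linarith)]; ring
  rcases eq_or_lt_of_le htl with h | h
  · subst h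
    rw [rho_mid hl0 hl6 (by linarith) le_rfl]
    have hr : (1:ℝ)-2*t ≠ 0 := by linarith
    field_simp
  unfold rhoAux
  rw [if_neg (by push_neg; linarith), if_neg (by push_neg; linarith), hm,
    clamp_eq (by nlinarith [sq_nonneg (1-2*t)]) (by rw [← hm]; exact mA_le_one hl0 hl6 (1-2*t)),
    max_eq_right (by nlinarith : (0:ℝ) ≤ (1-2*t)*(1-(1-2*t)))]
  ring

end Rho

section Cont
variable {C' : ℝ → ℝ} {l : ℝ} (hl0 : 0 < l) (hl6 : l < 1/6)
include hl0 hl6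

lemma mA_cont : Continuous (mAux l) := by
  have c4 : Continuous (fun t : ℝ => if t ≤ (1:ℝ) then t^2*(1-t)/2 else 0) := by
    apply Continuous.if_le (by continuity) continuous_const continuous_id continuous_const
    intro x hx; simp only [id_eq] at hx; rw [hx]; norm_num
  have c3 : Continuous (fun t : ℝ => if t ≤ 1-2*l then l*(1-2*l)^2
      else if t ≤ (1:ℝ) then t^2*(1-t)/2 else 0) := by
    apply Continuous.if_le continuous_const c4 continuous_id continuous_const
    intro x hx; simp only [id_eq] at hx; rw [hx]
    rw [if_pos (by linarith : 1-2*l ≤ (1:ℝ))]; ring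
  have c2 : Continuous (fun t : ℝ => if t ≤ l then t*(1-2*t)^2 else if t ≤ 1-2*l then l*(1-2*l)^2
      else if t ≤ (1:ℝ) then t^2*(1-t)/2 else 0) := by
    apply Continuous.if_le (by continuity) c3 continuous_id continuous_const
    intro x hx; simp only [id_eq] at hx; rw [hx]
    rw [if_pos (by linarith : l ≤ 1-2*l)]
  unfold mAux
  apply Continuous.if_le continuous_const c2 continuous_id continuous_const
  intro x hx; simp only [id_eq] at hx; rw [hx]
  rw [if_pos hl0.le]; ring

variable (hC' : ContinuousOn C' (Icc (0:ℝ) 1))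
include hC'

lemma rho_cont : Continuous (rhoAux C' l) := by
  have hCc : Continuous (fun t : ℝ => C' (clamp (mAux l t))) :=
    hC'.comp_continuous (continuous_clamp.comp (mA_cont hl0 hl6)) (fun x => clamp_mem _)
  have c1 : Continuous (fun t : ℝ => (1-2*t)^2 * C' (clamp (mAux l t))) :=
    (by continuity : Continuous (fun t : ℝ => (1-2*t)^2)).mul hCc
  have c3 : Continuous (fun t : ℝ => (max 0 (t*(1-t))/2) * C' (clamp (mAux l t))) :=
    (((continuous_const.max (by continuity)).div_const 2)).mul hCc
  have c2 : Continuous (fun t : ℝ => (l*(1-2*l)^2 / max t l) * C' (clamp (l*(1-2*l)^2))) := by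
    apply Continuous.mul _ continuous_const
    exact continuous_const.div (continuous_id.max continuous_const)
      (fun x => ne_of_gt (lt_max_of_lt_right hl0))
  have c23 : Continuous (fun t : ℝ => if t ≤ 1-2*l
      then (l*(1-2*l)^2 / max t l) * C' (clamp (l*(1-2*l)^2))
      else (max 0 (t*(1-t))/2) * C' (clamp (mAux l t))) := by
    apply Continuous.if_le c2 c3 continuous_id continuous_const
    intro x hx; simp only [id_eq] at hx; rw [hx]
    have h1 : mAux l (1-2*l) = l*(1-2*l)^2 := by
      rw [mA_eq3 hl0 hl6 le_rfl (by linarith)]; ring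
    rw [h1, max_eq_left (by linarith : l ≤ 1-2*l),
      max_eq_right (by nlinarith : (0:ℝ) ≤ (1-2*l)*(1-(1-2*l)))]
    have hr : (1:ℝ)-2*l ≠ 0 := by linarith
    field_simp
    ring
  unfold rhoAux
  apply Continuous.if_le c1 c23 continuous_id continuous_const
  intro x hx; simp only [id_eq] at hx; rw [hx]
  have h1 : mAux l l = l*(1-2*l)^2 := mA_eq1 hl0 hl6 hl0 le_rfl
  rw [if_pos (by linarith : l ≤ 1-2*l), h1, max_self]
  have hl' : l ≠ 0 := ne_of_gt hl0
  field_simp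

end Cont

/-- Monotone comparison from pointwise derivatives on the interior of an interval. -/
lemma le_of_deriv_nonneg_Icc {f f' : ℝ → ℝ} {a b : ℝ} (hcont : ContinuousOn f (Icc a b))
    (hd : ∀ x ∈ Ioo a b, HasDerivAt f (f' x) x) (h0 : ∀ x ∈ Ioo a b, 0 ≤ f' x)
    {x y : ℝ} (hx : x ∈ Icc a b) (hy : y ∈ Icc a b) (hxy : x ≤ y) : f x ≤ f y := by
  have hm : MonotoneOn f (Icc a b) := monotoneOn_of_deriv_nonneg (convex_Icc a b) hcont
    (fun z hz => (hd z (by rwa [interior_Icc] at hz)).differentiableAt.differentiableWithinAt)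
    (fun z hz => by rw [interior_Icc] at hz; rw [(hd z hz).deriv]; exact h0 z hz)
  exact hm hx hy hxy

lemma le_of_deriv_nonpos_Icc {f f' : ℝ → ℝ} {a b : ℝ} (hcont : ContinuousOn f (Icc a b))
    (hd : ∀ x ∈ Ioo a b, HasDerivAt f (f' x) x) (h0 : ∀ x ∈ Ioo a b, f' x ≤ 0)
    {x y : ℝ} (hx : x ∈ Icc a b) (hy : y ∈ Icc a b) (hxy : x ≤ y) : f y ≤ f x := by
  have hm : AntitoneOn f (Icc a b) := antitoneOn_of_deriv_nonpos (convex_Icc a b) hcont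
    (fun z hz => (hd z (by rwa [interior_Icc] at hz)).differentiableAt.differentiableWithinAt)
    (fun z hz => by rw [interior_Icc] at hz; rw [(hd z hz).deriv]; exact h0 z hz)
  exact hm hx hy hxy

section Phi
variable {C C' : ℝ → ℝ} {l : ℝ} (hl0 : 0 < l) (hl6 : l < 1/6)
  (hC' : ContinuousOn C' (Icc (0:ℝ) 1))
include hl0 hl6 hC'

lemma phi_hasDeriv (x : ℝ) : HasDerivAt (phiAux C C' l) (rhoAux C' l x) x := by
  have hc := rho_cont hl0 hl6 hC'
  have h := intervalIntegral.integral_hasDerivAt_right (hc.intervalIntegrable l x)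
    (hc.stronglyMeasurableAtFilter volume (nhds x)) hc.continuousAt
  exact h.const_add _

lemma phi_cont : Continuous (phiAux C C' l) := by
  rw [continuous_iff_continuousAt]
  exact fun x => (phi_hasDeriv hl0 hl6 hC' (C := C) x).continuousAt

lemma phi_at_l : phiAux C C' l l
    = (C (l*(1-2*l)^2) - 2*(l*(1-2*l)^2*C' (l*(1-2*l)^2))*Real.log ((1-2*l)/l))/3 := by
  unfold phiAux
  rw [intervalIntegral.integral_same, add_zero]

lemma phi_mid {x : ℝ} (h1 : l ≤ x) (h2 : x ≤ 1-2*l) :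
    phiAux C C' l x
      = (C (l*(1-2*l)^2) - 2*(l*(1-2*l)^2*C' (l*(1-2*l)^2))*Real.log ((1-2*l)/l))/3
        + (l*(1-2*l)^2*C' (l*(1-2*l)^2)) * Real.log (x/l) := by
  unfold phiAux
  congr 1
  rw [intervalIntegral.integral_congr
      (g := fun t => (l*(1-2*l)^2*C' (l*(1-2*l)^2)) * t⁻¹)
      (fun t ht => by
        rw [uIcc_of_le h1, mem_Icc] at ht
        exact rho_mid hl0 hl6 ht.1 (ht.2.trans h2)),
    intervalIntegral.integral_const_mul, integral_inv
      (by rw [uIcc_of_le h1, mem_Icc]; rintro ⟨h0, _⟩; linarith)]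

end Phi

section Duality
variable {C C' : ℝ → ℝ} {l : ℝ}
  (hC : ∀ t ∈ Set.Icc (0 : ℝ) 1, HasDerivWithinAt C (C' t) (Set.Icc (0 : ℝ) 1) t)
  (hU : StrictMonoOn (fun t => t * C' t) (Set.Icc (0 : ℝ) 1))

include hC in
lemma C_contOn : ContinuousOn C (Icc (0:ℝ) 1) := fun t ht => (hC t ht).continuousWithinAt

include hC in
lemma C_hasDerivAt {t : ℝ} (h0 : 0 < t) (h1 : t < 1) : HasDerivAt C (C' t) t :=
  (hC t ⟨h0.le, h1.le⟩).hasDerivAt (Icc_mem_nhds h0 h1)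

include hU in
lemma u_mono {s t : ℝ} (hs : s ∈ Icc (0:ℝ) 1) (ht : t ∈ Icc (0:ℝ) 1) (hst : s ≤ t) :
    s * C' s ≤ t * C' t := hU.monotoneOn hs ht hst

include hU in
lemma u_nonneg {s : ℝ} (hs : s ∈ Icc (0:ℝ) 1) : 0 ≤ s * C' s := by
  have h := u_mono hU (⟨le_rfl, zero_le_one⟩ : (0:ℝ) ∈ Icc (0:ℝ) 1) hs hs.1
  simpa using h

include hC hU in
/-- Tangent-line inequality from convexity of `s ↦ C(eˢ)`. -/
lemma C_tangent {p q : ℝ} (hp0 : 0 < p) (hp1 : p ≤ 1) (hq0 : 0 < q) (hq1 : q ≤ 1) :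
    C q + (q*C' q) * (Real.log p - Real.log q) ≤ C p := by
  set G : ℝ → ℝ := fun s => C s - (q*C' q) * Real.log s with hG
  have hGd : ∀ s, 0 < s → s < 1 → HasDerivAt G (C' s - (q*C' q) * s⁻¹) s := fun s h0 h1 =>
    (C_hasDerivAt hC h0 h1).sub ((Real.hasDerivAt_log (ne_of_gt h0)).const_mul _)
  have hGc : ∀ a b : ℝ, 0 < a → b ≤ 1 → ContinuousOn G (Icc a b) := by
    intro a b ha hb
    apply ((C_contOn hC).mono (Icc_subset_Icc ha.le hb)).sub
    exact continuousOn_const.mul (Real.continuousOn_log.mono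
      (fun s hs => ne_of_gt (lt_of_lt_of_le ha hs.1)))
  have hres : G q ≤ G p := by
    rcases le_total p q with hpq | hpq
    · apply le_of_deriv_nonpos_Icc (hGc p q hp0 hq1)
        (fun s hs => hGd s (hp0.trans hs.1) (lt_of_lt_of_le hs.2 hq1))
        (f' := fun s => C' s - (q*C' q) * s⁻¹) ?_ ⟨le_rfl, hpq⟩ ⟨hpq, le_rfl⟩ hpq
      intro s hs
      have hs0 : 0 < s := hp0.trans hs.1
      have key : s * C' s ≤ q * C' q :=
        u_mono hU ⟨hs0.le, by linarith [hs.2, hq1]⟩ ⟨hq0.le, hq1⟩ hs.2.le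
      have heq : C' s - (q*C' q) * s⁻¹ = (s*C' s - q*C' q) / s := by
        field_simp
      show C' s - (q*C' q) * s⁻¹ ≤ 0
      rw [heq]
      exact div_nonpos_of_nonpos_of_nonneg (by linarith) hs0.le
    · apply le_of_deriv_nonneg_Icc (hGc q p hq0 hp1)
        (fun s hs => hGd s (hq0.trans hs.1) (lt_of_lt_of_le hs.2 hp1))
        (f' := fun s => C' s - (q*C' q) * s⁻¹) ?_ ⟨le_rfl, hpq⟩ ⟨hpq, le_rfl⟩ hpq
      intro s hs
      have hs0 : 0 < s := hq0.trans hs.1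
      have key : q * C' q ≤ s * C' s :=
        u_mono hU ⟨hq0.le, hq1⟩ ⟨hs0.le, by linarith [hs.2, hp1]⟩ hs.1.le
      have heq : C' s - (q*C' q) * s⁻¹ = (s*C' s - q*C' q) / s := by
        field_simp
      show 0 ≤ C' s - (q*C' q) * s⁻¹
      rw [heq]
      exact div_nonneg (by linarith) hs0.le
  simp only [hG] at hres
  have hexp : (q*C' q) * (Real.log p - Real.log q)
      = (q*C' q) * Real.log p - (q*C' q) * Real.log q := by ring
  linarith [hres]

end Duality

section SegEq
variable {C C' : ℝ → ℝ} {l : ℝ} (hl0 : 0 < l) (hl6 : l < 1/6)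
  (hC : ∀ t ∈ Set.Icc (0 : ℝ) 1, HasDerivWithinAt C (C' t) (Set.Icc (0 : ℝ) 1) t)
  (hC' : ContinuousOn C' (Set.Icc (0 : ℝ) 1))
include hl0 hl6 hC hC'

lemma seg_eq {t : ℝ} (ht0 : 0 ≤ t) (htl : t ≤ l) :
    C (t*(1-2*t)^2) = phiAux C C' l t + 2 * phiAux C C' l (1-2*t) := by
  set E : ℝ → ℝ := fun s => phiAux C C' l s + 2 * phiAux C C' l (1-2*s) - C (s*(1-2*s)^2)
    with hE
  have hqc : Continuous (fun s : ℝ => s*(1-2*s)^2) := by continuity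
  have hEc : ContinuousOn E (Icc 0 l) := by
    apply ContinuousOn.sub
    · exact ((phi_cont hl0 hl6 hC').continuousOn).add
        (continuousOn_const.mul (((phi_cont hl0 hl6 hC').comp
          (by continuity : Continuous fun s : ℝ => 1-2*s)).continuousOn))
    · apply (C_contOn hC).comp hqc.continuousOn
      intro s hs
      simp only [mem_Icc] at hs
      dsimp only
      constructor
      · exact mul_nonneg hs.1 (sq_nonneg _)
      · have h1 := b1_mono hs.1 hs.2 hl6.le
        have h2 := A_le_one hl0 hl6
        linarith
  have hEd : ∀ s ∈ Ioo (0:ℝ) l, HasDerivAt E 0 s := by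
    intro s hs
    have hs0 : 0 < s := hs.1
    have hsl : s < l := hs.2
    have hin : HasDerivAt (fun y : ℝ => 1-2*y) (-2) s := by
      simpa using ((hasDerivAt_id s).const_mul (2:ℝ)).const_sub 1
    have hq : HasDerivAt (fun y : ℝ => y*(1-2*y)^2)
        (1*(1-2*s)^2 + s*((2:ℕ)*(1-2*s)^(2-1)*(-2))) s := (hasDerivAt_id s).mul (hin.pow 2)
    have hp0 : 0 < s*(1-2*s)^2 := by
      have h12 : 0 < 1-2*s := by linarith
      positivity
    have hp1 : s*(1-2*s)^2 < 1 := by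
      have h1 := b1_mono hs0.le hsl.le hl6.le
      nlinarith [sq_nonneg (1-2*l)]
    have h4 : HasDerivAt (fun y : ℝ => C (y*(1-2*y)^2))
        (C' (s*(1-2*s)^2) * (1*(1-2*s)^2 + s*((2:ℕ)*(1-2*s)^(2-1)*(-2)))) s :=
      (C_hasDerivAt hC hp0 hp1).comp s hq
    have h2 : HasDerivAt (fun y : ℝ => phiAux C C' l (1-2*y)) (rhoAux C' l (1-2*s) * (-2)) s :=
      by have := (phi_hasDeriv (C := C) hl0 hl6 hC' (1-2*s)).comp s hin; exact this
    have hsum := ((phi_hasDeriv (C := C) hl0 hl6 hC' s).add (h2.const_mul 2)).sub h4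
    have hzero : rhoAux C' l s + 2*(rhoAux C' l (1-2*s) * (-2))
        - C' (s*(1-2*s)^2) * (1*(1-2*s)^2 + s*((2:ℕ)*(1-2*s)^(2-1)*(-2))) = 0 := by
      rw [rho_eq1 hl0 hl6 hs0 hsl.le, rho_mirror hl0 hl6 hs0.le hsl.le]
      push_cast
      ring
    rw [hzero] at hsum
    exact hsum
  have hEl : E l = 0 := by
    simp only [hE]
    rw [phi_at_l hl0 hl6 hC', phi_mid hl0 hl6 hC' (by linarith) le_rfl]
    ring
  have hmem : t ∈ Icc (0:ℝ) l := ⟨ht0, htl⟩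
  have hlmem : l ∈ Icc (0:ℝ) l := ⟨hl0.le, le_rfl⟩
  have h1 := le_of_deriv_nonneg_Icc (f' := fun _ => (0:ℝ)) hEc hEd
    (fun s _ => le_rfl) hmem hlmem htl
  have h2 := le_of_deriv_nonpos_Icc (f' := fun _ => (0:ℝ)) hEc hEd
    (fun s _ => le_rfl) hmem hlmem htl
  have hEt : E t = 0 := by rw [← hEl]; exact le_antisymm h1 h2
  simp only [hE] at hEt
  linarith

end SegEq

section AB
variable {C C' : ℝ → ℝ} {l : ℝ} (hl0 : 0 < l) (hl6 : l < 1/6)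
  (hC : ∀ t ∈ Set.Icc (0 : ℝ) 1, HasDerivWithinAt C (C' t) (Set.Icc (0 : ℝ) 1) t)
  (hC' : ContinuousOn C' (Set.Icc (0 : ℝ) 1))
include hl0 hl6 hC hC'

lemma lemmaA {p : ℝ × ℝ × ℝ} (hp : p ∈ Mset l) :
    C (p.1*p.2.1*p.2.2) = phiAux C C' l p.1 + phiAux C C' l p.2.1 + phiAux C C' l p.2.2 := by
  rcases hp with ⟨t, ht0, htl, h | h | h⟩ | ⟨h1, h2, h3, h4, h5, h6, h7⟩
  · subst h
    simp only
    rw [show t*(1-2*t)*(1-2*t) = t*(1-2*t)^2 by ring, seg_eq hl0 hl6 hC hC' ht0 htl]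
    ring
  · subst h
    simp only
    rw [show (1-2*t)*t*(1-2*t) = t*(1-2*t)^2 by ring, seg_eq hl0 hl6 hC hC' ht0 htl]
    ring
  · subst h
    simp only
    rw [show (1-2*t)*(1-2*t)*t = t*(1-2*t)^2 by ring, seg_eq hl0 hl6 hC hC' ht0 htl]
    ring
  · have hx0 : 0 < p.1 := lt_of_lt_of_le hl0 h1
    have hy0 : 0 < p.2.1 := lt_of_lt_of_le hl0 h3
    have hz0 : 0 < p.2.2 := lt_of_lt_of_le hl0 h5
    have hr0 : (0:ℝ) < 1-2*l := by linarith
    rw [phi_mid hl0 hl6 hC' h1 h2, phi_mid hl0 hl6 hC' h3 h4, phi_mid hl0 hl6 hC' h5 h6, h7]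
    have hsum : Real.log (p.1/l) + Real.log (p.2.1/l) + Real.log (p.2.2/l)
        = 2 * Real.log ((1-2*l)/l) := by
      rw [Real.log_div hx0.ne' hl0.ne', Real.log_div hy0.ne' hl0.ne',
        Real.log_div hz0.ne' hl0.ne', Real.log_div hr0.ne' hl0.ne']
      have hlog : Real.log p.1 + Real.log p.2.1 + Real.log p.2.2
          = Real.log l + 2*Real.log (1-2*l) := by
        rw [← Real.log_mul hx0.ne' hy0.ne', ← Real.log_mul (mul_pos hx0 hy0).ne' hz0.ne', h7,
          Real.log_mul hl0.ne' (by positivity), Real.log_pow]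
        push_cast
        ring
      linarith
    linear_combination (-(l*(1-2*l)^2*C' (l*(1-2*l)^2))) * hsum

variable (hU : StrictMonoOn (fun t => t * C' t) (Set.Icc (0 : ℝ) 1))
include hU

lemma rho_nonneg {s : ℝ} (hs0 : 0 < s) (hs1 : s ≤ 1) : 0 ≤ rhoAux C' l s := by
  have h : 0 ≤ s * rhoAux C' l s := by
    rw [rho_key hl0 hl6 hs0 hs1]
    exact u_nonneg hU ⟨mA_nonneg hl0 hl6 s, mA_le_one hl0 hl6 s⟩
  have h' : s*0 ≤ s * rhoAux C' l s := by linarith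
  exact le_of_mul_le_mul_left h' hs0

lemma phi_mono {a b : ℝ} (ha : 0 ≤ a) (hab : a ≤ b) (hb : b ≤ 1) :
    phiAux C C' l a ≤ phiAux C C' l b := by
  apply le_of_deriv_nonneg_Icc (f' := rhoAux C' l) (a := a) (b := b)
    ((phi_cont hl0 hl6 hC').continuousOn)
    (fun s _ => phi_hasDeriv hl0 hl6 hC' s)
    (fun s hs => rho_nonneg hl0 hl6 hC hC' hU (lt_of_le_of_lt ha hs.1) (le_of_lt (lt_of_lt_of_le hs.2 hb)))
    ⟨le_rfl, hab⟩ ⟨hab, le_rfl⟩ hab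

end AB

section B
variable {C C' : ℝ → ℝ} {l : ℝ} (hl0 : 0 < l) (hl6 : l < 1/6)
  (hC : ∀ t ∈ Set.Icc (0 : ℝ) 1, HasDerivWithinAt C (C' t) (Set.Icc (0 : ℝ) 1) t)
  (hC' : ContinuousOn C' (Set.Icc (0 : ℝ) 1))
  (hU : StrictMonoOn (fun t => t * C' t) (Set.Icc (0 : ℝ) 1))
include hl0 hl6 hC hC' hU

lemma lemmaB_min {x y z : ℝ} (hx : x ∈ Icc (0:ℝ) 1) (hy : y ∈ Icc (0:ℝ) 1)
    (hz : z ∈ Icc (0:ℝ) 1) (hxy : x ≤ y) (hxz : x ≤ z) :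
    phiAux C C' l x + phiAux C C' l y + phiAux C C' l z ≤ C (x*y*z) := by
  have hcont : ∀ (c : ℝ) (a b : ℝ), 0 < a →
      ContinuousOn (fun w => c*Real.log w - phiAux C C' l w) (Icc a b) := fun c a b ha =>
    (continuousOn_const.mul (Real.continuousOn_log.mono
        (fun s hs => ne_of_gt (lt_of_lt_of_le ha hs.1)))).sub
      (phi_cont hl0 hl6 hC').continuousOn
  have hderiv : ∀ (c : ℝ) (s : ℝ), 0 < s →
      HasDerivAt (fun w => c*Real.log w - phiAux C C' l w) (c*s⁻¹ - rhoAux C' l s) s :=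
    fun c s hs => ((Real.hasDerivAt_log hs.ne').const_mul c).sub (phi_hasDeriv hl0 hl6 hC' s)
  rcases eq_or_lt_of_le hx.1 with h0 | hx0
  · -- x = 0
    have hx' : x = 0 := h0.symm
    subst hx'
    rw [zero_mul, zero_mul]
    have hseg := seg_eq hl0 hl6 hC hC' (le_refl (0:ℝ)) hl0.le
    norm_num at hseg
    rw [hseg]
    have m1 := phi_mono hl0 hl6 hC hC' hU hy.1 hy.2 le_rfl
    have m2 := phi_mono hl0 hl6 hC hC' hU hz.1 hz.2 le_rfl
    linarith
  · have hy0 : 0 < y := lt_of_lt_of_le hx0 hxy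
    have hz0 : 0 < z := lt_of_lt_of_le hx0 hxz
    have hp0 : 0 < x*y*z := by positivity
    have hp1 : x*y*z ≤ 1 := by
      have hxy1 : x*y ≤ 1 := by nlinarith [mul_le_mul hx.2 hy.2 hy0.le zero_le_one]
      nlinarith [mul_nonneg (sub_nonneg.2 hxy1) hz0.le, hz.2]
    rcases le_or_gt x l with hxl | hlx
    · -- 0 < x ≤ l : use the tangent at q = x(1-2x)²
      have h2x0 : (0:ℝ) < 1-2*x := by linarith
      have hq0 : 0 < x*(1-2*x)^2 := by positivity
      have hq1 : x*(1-2*x)^2 ≤ 1 := by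
        have hb := b1_mono hx0.le hxl hl6.le
        have hA := A_le_one hl0 hl6
        linarith
      have hkey := C_tangent hC hU hp0 hp1 hq0 hq1
      set c : ℝ := x*(1-2*x)^2 * C' (x*(1-2*x)^2) with hc
      have hmx : mAux l x = x*(1-2*x)^2 := mA_eq1 hl0 hl6 hx0 hxl
      have hstep : ∀ w, x ≤ w → w ≤ 1 →
          c*Real.log (1-2*x) - phiAux C C' l (1-2*x) ≤ c*Real.log w - phiAux C C' l w := by
        intro w hw1 hw2
        rcases le_total w (1-2*x) with hw | hw
        · apply le_of_deriv_nonpos_Icc (f' := fun s => c*s⁻¹ - rhoAux C' l s)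
            (hcont c x (1-2*x) hx0) (fun s hs => hderiv c s (hx0.trans hs.1)) ?_
            ⟨hw1, hw⟩ ⟨by linarith, le_rfl⟩ hw
          intro s hs
          have hs0 : 0 < s := hx0.trans hs.1
          have hs1 : s ≤ 1 := by linarith [hs.2]
          have hmm := m_ge_of hl0 hl6 hx0 hxl hs.1.le hs.2.le
          have humono := u_mono hU
            ⟨mA_nonneg hl0 hl6 x, mA_le_one hl0 hl6 x⟩
            ⟨mA_nonneg hl0 hl6 s, mA_le_one hl0 hl6 s⟩ hmm
          rw [hmx] at humono
          rw [← rho_key hl0 hl6 hs0 hs1] at humono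
          have heq : c*s⁻¹ - rhoAux C' l s = (c - s*rhoAux C' l s)/s := by
            field_simp
          show c*s⁻¹ - rhoAux C' l s ≤ 0
          rw [heq]
          exact div_nonpos_of_nonpos_of_nonneg (by linarith) hs0.le
        · apply le_of_deriv_nonneg_Icc (f' := fun s => c*s⁻¹ - rhoAux C' l s)
            (hcont c (1-2*x) 1 h2x0) (fun s hs => hderiv c s (h2x0.trans hs.1)) ?_
            ⟨le_rfl, by linarith⟩ ⟨hw, hw2⟩ hw
          intro s hs
          have hs0 : 0 < s := h2x0.trans hs.1
          have hs1 : s ≤ 1 := hs.2.le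
          have hmm := m_le_of hl0 hl6 hx0 hxl hs.1.le hs1
          have humono := u_mono hU
            ⟨mA_nonneg hl0 hl6 s, mA_le_one hl0 hl6 s⟩
            ⟨mA_nonneg hl0 hl6 x, mA_le_one hl0 hl6 x⟩ hmm
          rw [hmx] at humono
          rw [← rho_key hl0 hl6 hs0 hs1] at humono
          have heq : c*s⁻¹ - rhoAux C' l s = (c - s*rhoAux C' l s)/s := by
            field_simp
          show 0 ≤ c*s⁻¹ - rhoAux C' l s
          rw [heq]
          exact div_nonneg (by linarith) hs0.le
      have h1 := hstep y hxy hy.2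
      have h2 := hstep z hxz hz.2
      have hseg := seg_eq hl0 hl6 hC hC' hx0.le hxl
      have hlq : Real.log (x*y*z) - Real.log (x*(1-2*x)^2)
          = Real.log y + Real.log z - 2*Real.log (1-2*x) := by
        rw [Real.log_mul (mul_pos hx0 hy0).ne' hz0.ne', Real.log_mul hx0.ne' hy0.ne',
          Real.log_mul hx0.ne' (by positivity), Real.log_pow]
        push_cast
        ring
      rw [hlq] at hkey
      have hexp : c * (Real.log y + Real.log z - 2*Real.log (1-2*x))
          = c*Real.log y + c*Real.log z - 2*(c*Real.log (1-2*x)) := by ring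
      rw [hexp] at hkey
      linarith
    · -- l < x : use the tangent at q = l(1-2l)²
      have hA0 : 0 < l*(1-2*l)^2 := A_pos hl0 hl6
      have hA1 : l*(1-2*l)^2 ≤ 1 := A_le_one hl0 hl6
      have hkey := C_tangent hC hU hp0 hp1 hA0 hA1
      set c : ℝ := l*(1-2*l)^2 * C' (l*(1-2*l)^2) with hc
      have hstar : ∀ w, l ≤ w → w ≤ 1 →
          c*Real.log l - phiAux C C' l l ≤ c*Real.log w - phiAux C C' l w := by
        intro w hw1 hw2
        apply le_of_deriv_nonneg_Icc (f' := fun s => c*s⁻¹ - rhoAux C' l s)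
          (hcont c l 1 hl0) (fun s hs => hderiv c s (hl0.trans hs.1)) ?_
          ⟨le_rfl, by linarith⟩ ⟨hw1, hw2⟩ hw1
        intro s hs
        have hs0 : 0 < s := hl0.trans hs.1
        have hs1 : s ≤ 1 := hs.2.le
        have hmm := mA_le hl0 hl6 s
        have humono := u_mono hU
          ⟨mA_nonneg hl0 hl6 s, mA_le_one hl0 hl6 s⟩ ⟨hA0.le, hA1⟩ hmm
        rw [← rho_key hl0 hl6 hs0 hs1] at humono
        have heq : c*s⁻¹ - rhoAux C' l s = (c - s*rhoAux C' l s)/s := by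
          field_simp
        show 0 ≤ c*s⁻¹ - rhoAux C' l s
        rw [heq]
        exact div_nonneg (by linarith) hs0.le
      have h1 := hstar x hlx.le hx.2
      have h2 := hstar y (hlx.le.trans hxy) hy.2
      have h3 := hstar z (hlx.le.trans hxz) hz.2
      rw [phi_at_l hl0 hl6 hC'] at h1 h2 h3
      have hlogD : Real.log ((1-2*l)/l) = Real.log (1-2*l) - Real.log l :=
        Real.log_div (by linarith) hl0.ne'
      rw [hlogD] at h1 h2 h3
      have hlogs : Real.log (x*y*z) - Real.log (l*(1-2*l)^2)
          = Real.log x + Real.log y + Real.log z - Real.log l - 2*Real.log (1-2*l) := by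
        rw [Real.log_mul (mul_pos hx0 hy0).ne' hz0.ne', Real.log_mul hx0.ne' hy0.ne',
          Real.log_mul hl0.ne' (pow_ne_zero 2 (ne_of_gt (by linarith : (0:ℝ) < 1-2*l))), Real.log_pow]
        push_cast
        ring
      rw [hlogs] at hkey
      have hexp : c * (Real.log x + Real.log y + Real.log z - Real.log l - 2*Real.log (1-2*l))
          = c*Real.log x + c*Real.log y + c*Real.log z - c*Real.log l
            - 2*(c*Real.log (1-2*l)) := by ring
      rw [hexp] at hkey
      have hexp2 : ∀ L : ℝ, c*Real.log l -
          (C (l*(1-2*l)^2) - 2*c*(Real.log (1-2*l) - Real.log l))/3 ≤ c*L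
            → True := fun _ _ => trivial
      rw [hc] at h1 h2 h3 hkey
      ring_nf at h1 h2 h3 hkey ⊢
      linarith

lemma lemmaB {x y z : ℝ} (hx : x ∈ Icc (0:ℝ) 1) (hy : y ∈ Icc (0:ℝ) 1)
    (hz : z ∈ Icc (0:ℝ) 1) :
    phiAux C C' l x + phiAux C C' l y + phiAux C C' l z ≤ C (x*y*z) := by
  rcases le_total x y with hxy | hyx
  · rcases le_total x z with hxz | hzx
    · exact lemmaB_min hl0 hl6 hC hC' hU hx hy hz hxy hxz
    · have h := lemmaB_min hl0 hl6 hC hC' hU hz hx hy hzx (hzx.trans hxy)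
      rw [show z*x*y = x*y*z by ring] at h
      linarith
  · rcases le_total y z with hyz | hzy
    · have h := lemmaB_min hl0 hl6 hC hC' hU hy hx hz hyx hyz
      rw [show y*x*z = x*y*z by ring] at h
      linarith
    · have h := lemmaB_min hl0 hl6 hC hC' hU hz hx hy (hzy.trans hyx) hzy
      rw [show z*x*y = x*y*z by ring] at h
      linarith

end B

lemma Mset_closed {l : ℝ} : IsClosed (Mset l) := by
  have h1 : IsClosed ((fun t : ℝ => ((t, 1-2*t, 1-2*t) : ℝ×ℝ×ℝ)) '' Icc 0 l ∪
      ((fun t : ℝ => ((1-2*t, t, 1-2*t) : ℝ×ℝ×ℝ)) '' Icc 0 l ∪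
       (fun t : ℝ => ((1-2*t, 1-2*t, t) : ℝ×ℝ×ℝ)) '' Icc 0 l)) :=
    ((isCompact_Icc.image (by fun_prop)).isClosed).union
      (((isCompact_Icc.image (by fun_prop)).isClosed).union
        ((isCompact_Icc.image (by fun_prop)).isClosed))
  have h2 : IsClosed {p : ℝ×ℝ×ℝ | l ≤ p.1 ∧ p.1 ≤ 1-2*l ∧ l ≤ p.2.1 ∧ p.2.1 ≤ 1-2*l ∧
      l ≤ p.2.2 ∧ p.2.2 ≤ 1-2*l ∧ p.1*p.2.1*p.2.2 = l*(1-2*l)^2} := by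
    simp only [setOf_and]
    exact (isClosed_le continuous_const continuous_fst).inter
      ((isClosed_le continuous_fst continuous_const).inter
      ((isClosed_le continuous_const (by fun_prop)).inter
      ((isClosed_le (by fun_prop) continuous_const).inter
      ((isClosed_le continuous_const (by fun_prop)).inter
      ((isClosed_le (by fun_prop) continuous_const).inter
      (isClosed_eq (by fun_prop) continuous_const))))))
  have hset : {p : ℝ×ℝ×ℝ | ∃ t, 0 ≤ t ∧ t ≤ l ∧
      (p = (t, 1 - 2*t, 1 - 2*t) ∨ p = (1 - 2*t, t, 1 - 2*t) ∨ p = (1 - 2*t, 1 - 2*t, t))}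
      = ((fun t : ℝ => ((t, 1-2*t, 1-2*t) : ℝ×ℝ×ℝ)) '' Icc 0 l ∪
      ((fun t : ℝ => ((1-2*t, t, 1-2*t) : ℝ×ℝ×ℝ)) '' Icc 0 l ∪
       (fun t : ℝ => ((1-2*t, 1-2*t, t) : ℝ×ℝ×ℝ)) '' Icc 0 l)) := by
    ext p
    simp only [mem_setOf_eq, mem_union, mem_image, mem_Icc]
    constructor
    · rintro ⟨t, h0, h1, h | h | h⟩
      · exact Or.inl ⟨t, ⟨h0, h1⟩, h.symm⟩
      · exact Or.inr (Or.inl ⟨t, ⟨h0, h1⟩, h.symm⟩)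
      · exact Or.inr (Or.inr ⟨t, ⟨h0, h1⟩, h.symm⟩)
    · rintro (⟨t, ⟨h0, h1⟩, h⟩ | ⟨t, ⟨h0, h1⟩, h⟩ | ⟨t, ⟨h0, h1⟩, h⟩)
      · exact ⟨t, h0, h1, Or.inl h.symm⟩
      · exact ⟨t, h0, h1, Or.inr (Or.inl h.symm)⟩
      · exact ⟨t, h0, h1, Or.inr (Or.inr h.symm)⟩
  unfold Mset
  rw [hset]
  exact h1.union h2


/-- Every `(3,1)`-stochastic measure concentrated on `M` minimizes `∫ C(xyz)` among all
`(3,1)`-stochastic measures on `[0,1]³`. -/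
theorem stochastic_on_M_is_primal_solution (C C' : ℝ → ℝ)
    (hC : ∀ t ∈ Set.Icc (0 : ℝ) 1, HasDerivWithinAt C (C' t) (Set.Icc (0 : ℝ) 1) t)
    (hC' : ContinuousOn C' (Set.Icc (0 : ℝ) 1))
    (hU : StrictMonoOn (fun t => t * C' t) (Set.Icc (0 : ℝ) 1))
    (l : ℝ) (hl : l ∈ Set.Ioo (0 : ℝ) (1/6))
    (π : Measure (ℝ × ℝ × ℝ)) [IsProbabilityMeasure π] (hπM : π (Mset l) = 1)
    (hπ1 : π.map (fun p => p.1) = volume.restrict (Set.Icc (0 : ℝ) 1))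
    (hπ2 : π.map (fun p => p.2.1) = volume.restrict (Set.Icc (0 : ℝ) 1))
    (hπ3 : π.map (fun p => p.2.2) = volume.restrict (Set.Icc (0 : ℝ) 1))
    (ν : Measure (ℝ × ℝ × ℝ)) [IsProbabilityMeasure ν]
    (hνcube : ν (Set.Icc (0 : ℝ) 1 ×ˢ Set.Icc (0 : ℝ) 1 ×ˢ Set.Icc (0 : ℝ) 1) = 1)
    (hν1 : ν.map (fun p => p.1) = volume.restrict (Set.Icc (0 : ℝ) 1))
    (hν2 : ν.map (fun p => p.2.1) = volume.restrict (Set.Icc (0 : ℝ) 1))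
    (hν3 : ν.map (fun p => p.2.2) = volume.restrict (Set.Icc (0 : ℝ) 1)) :
    ∫ p, C (p.1 * p.2.1 * p.2.2) ∂π ≤ ∫ p, C (p.1 * p.2.1 * p.2.2) ∂ν := by
  obtain ⟨hl0, hl6⟩ := hl
  set φ : ℝ → ℝ := phiAux C C' l with hφ
  have hφc : Continuous φ := phi_cont hl0 hl6 hC'
  have hm1 : Measurable (fun p : ℝ×ℝ×ℝ => p.1) := measurable_fst
  have hm2 : Measurable (fun p : ℝ×ℝ×ℝ => p.2.1) := measurable_fst.comp measurable_snd
  have hm3 : Measurable (fun p : ℝ×ℝ×ℝ => p.2.2) := measurable_snd.comp measurable_snd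
  have hφint : Integrable φ (volume.restrict (Icc (0:ℝ) 1)) := hφc.integrableOn_Icc
  -- transfer along a projection with prescribed pushforward
  have key : ∀ (μ : Measure (ℝ×ℝ×ℝ)) (f : ℝ×ℝ×ℝ → ℝ), Measurable f →
      μ.map f = volume.restrict (Icc (0:ℝ) 1) →
      Integrable (fun p => φ (f p)) μ ∧
        ∫ p, φ (f p) ∂μ = ∫ t in Icc (0:ℝ) 1, φ t := by
    intro μ f hf hmap
    constructor
    · exact (integrable_map_measure (by rw [hmap]; exact hφc.aestronglyMeasurable)
        hf.aemeasurable).mp (by rw [hmap]; exact hφint)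
    · rw [← integral_map hf.aemeasurable (by rw [hmap]; exact hφc.aestronglyMeasurable), hmap]
  obtain ⟨iπ1, eπ1⟩ := key π _ hm1 hπ1
  obtain ⟨iπ2, eπ2⟩ := key π _ hm2 hπ2
  obtain ⟨iπ3, eπ3⟩ := key π _ hm3 hπ3
  obtain ⟨iν1, eν1⟩ := key ν _ hm1 hν1
  obtain ⟨iν2, eν2⟩ := key ν _ hm2 hν2
  obtain ⟨iν3, eν3⟩ := key ν _ hm3 hν3
  -- a.e. statements
  have hπM0 : π (Mset l)ᶜ = 0 := by
    have h := measure_compl (Mset_closed (l := l)).measurableSet (measure_ne_top π (Mset l))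
    rw [hπM, measure_univ] at h
    simpa using h
  have haeM : ∀ᵐ p ∂π, p ∈ Mset l := by
    rw [Filter.eventually_iff, mem_ae_iff]
    simpa using hπM0
  set cube : Set (ℝ×ℝ×ℝ) := Icc (0:ℝ) 1 ×ˢ Icc (0:ℝ) 1 ×ˢ Icc (0:ℝ) 1 with hcube
  have hcubeclosed : IsClosed cube := isClosed_Icc.prod (isClosed_Icc.prod isClosed_Icc)
  have hν0 : ν cubeᶜ = 0 := by
    have h := measure_compl hcubeclosed.measurableSet (measure_ne_top ν _)
    rw [hνcube, measure_univ] at h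
    simpa using h
  have haeC : ∀ᵐ p ∂ν, p ∈ cube := by
    rw [Filter.eventually_iff, mem_ae_iff]
    simpa using hν0
  -- π side: equality
  have hπeq : ∫ p, C (p.1 * p.2.1 * p.2.2) ∂π
      = ∫ p, (φ p.1 + φ p.2.1 + φ p.2.2) ∂π :=
    integral_congr_ae (haeM.mono fun p hp => lemmaA hl0 hl6 hC hC' hp)
  have hπsplit : ∫ p, (φ p.1 + φ p.2.1 + φ p.2.2) ∂π
      = (∫ p, φ p.1 ∂π) + (∫ p, φ p.2.1 ∂π) + (∫ p, φ p.2.2 ∂π) := by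
    have e1 := integral_add (iπ1.add iπ2) iπ3
    have e2 := integral_add iπ1 iπ2
    simp only [Pi.add_apply] at e1 e2
    rw [e1, e2]
  have hνsplit : ∫ p, (φ p.1 + φ p.2.1 + φ p.2.2) ∂ν
      = (∫ p, φ p.1 ∂ν) + (∫ p, φ p.2.1 ∂ν) + (∫ p, φ p.2.2 ∂ν) := by
    have e1 := integral_add (iν1.add iν2) iν3
    have e2 := integral_add iν1 iν2
    simp only [Pi.add_apply] at e1 e2
    rw [e1, e2]
  -- ν side : inequality
  have hgc : Continuous (fun p : ℝ×ℝ×ℝ => p.1 * p.2.1 * p.2.2) := by fun_prop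
  have hCtc : Continuous (fun s : ℝ => C (clamp s)) :=
    (C_contOn hC).comp_continuous continuous_clamp clamp_mem
  obtain ⟨M, hM⟩ := isCompact_Icc.exists_bound_of_continuousOn (C_contOn hC)
  have hcubemem : ∀ p : ℝ×ℝ×ℝ, p ∈ cube →
      p.1 * p.2.1 * p.2.2 ∈ Icc (0:ℝ) 1 := by
    intro p hp
    obtain ⟨⟨hx0, hx1⟩, ⟨hy0, hy1⟩, ⟨hz0, hz1⟩⟩ := hp
    constructor
    · positivity
    · nlinarith [mul_le_mul hx1 hy1 hy0 zero_le_one,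
        mul_nonneg (sub_nonneg.2 (by nlinarith [mul_le_mul hx1 hy1 hy0 zero_le_one] :
          p.1 * p.2.1 ≤ 1)) hz0]
  have hCtint : Integrable (fun p => C (clamp (p.1 * p.2.1 * p.2.2))) ν := by
    apply Integrable.mono' (integrable_const M) (hCtc.comp hgc).aestronglyMeasurable
    exact ae_of_all _ fun p => hM _ (clamp_mem _)
  have hCgint : Integrable (fun p : ℝ×ℝ×ℝ => C (p.1 * p.2.1 * p.2.2)) ν := by
    apply hCtint.congr
    exact haeC.mono fun p hp => by
      show C (clamp (p.1 * p.2.1 * p.2.2)) = C (p.1 * p.2.1 * p.2.2)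
      rw [clamp_eq (hcubemem p hp).1 (hcubemem p hp).2]
  have hνineq : ∫ p, (φ p.1 + φ p.2.1 + φ p.2.2) ∂ν
      ≤ ∫ p, C (p.1 * p.2.1 * p.2.2) ∂ν := by
    apply integral_mono_ae ((iν1.add iν2).add iν3) hCgint
    exact haeC.mono fun p hp => by
      have h := lemmaB hl0 hl6 hC hC' hU
        (show p.1 ∈ Icc (0:ℝ) 1 from hp.1)
        (show p.2.1 ∈ Icc (0:ℝ) 1 from hp.2.1)
        (show p.2.2 ∈ Icc (0:ℝ) 1 from hp.2.2)
      exact h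
  calc ∫ p, C (p.1 * p.2.1 * p.2.2) ∂π
      = (∫ p, φ p.1 ∂π) + (∫ p, φ p.2.1 ∂π) + (∫ p, φ p.2.2 ∂π) := by
        rw [hπeq, hπsplit]
    _ = (∫ p, φ p.1 ∂ν) + (∫ p, φ p.2.1 ∂ν) + (∫ p, φ p.2.2 ∂ν) := by
        rw [eπ1, eπ2, eπ3, eν1, eν2, eν3]
    _ = ∫ p, (φ p.1 + φ p.2.1 + φ p.2.2) ∂ν := hνsplit.symm
    _ ≤ ∫ p, C (p.1 * p.2.1 * p.2.2) ∂ν := hνineq
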